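/- Suppose u is uniform with values A > B > C. For every integer m with kmin < m ≤ N, the cut-off profile s with cut-off m has expected utility over the subgame T1 given by EU_{T1}(s) = ((m - 1 - kmin)·A + C + (kmax - m)·B) / (kmax - kmin). (In particular, |T1| = kmax - kmin.) -/

import Mathlib

/-- The two actions: `c` (canteen) and `o` (office). -/
inductive Act : Type
  | c : Act
  | o : Act
deriving DecidableEq

open Act

/-- The set of arrival pairs
`T = {(k, k+1) : kmin ≤ k ≤ kmax - 1} ∪ {(k, k-1) : kmin + 1 ≤ k ≤ kmax}`. -/
noncomputable def T (kmin kmax : ℤ) : Finset (ℤ × ℤ) :=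
  ((Finset.Icc kmin (kmax - 1)).image (fun k => (k, k + 1))) ∪
  ((Finset.Icc (kmin + 1) kmax).image (fun k => (k, k - 1)))

/-- Subgame `T1 = {(t1,t2) ∈ T : t1 ≡ kmin (mod 2)}`. -/
noncomputable def T1 (kmin kmax : ℤ) : Finset (ℤ × ℤ) :=
  (T kmin kmax).filter (fun t => t.1 % 2 = kmin % 2)

/-- Subgame `T2 = {(t1,t2) ∈ T : t2 ≡ kmin (mod 2)}`. -/
noncomputable def T2 (kmin kmax : ℤ) : Finset (ℤ × ℤ) :=
  (T kmin kmax).filter (fun t => t.2 % 2 = kmin % 2)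

/-- The expected utility of profile `s` over a set `S` of arrival pairs:
`EU_S(s) = (1/|S|) · Σ_{(t1,t2) ∈ S} u_{(t1,t2)}(s_1(t1), s_2(t2))`. -/
noncomputable def EU (u : ℤ × ℤ → Act → Act → ℝ) (s : (ℤ → Act) × (ℤ → Act))
    (S : Finset (ℤ × ℤ)) : ℝ :=
  (∑ t ∈ S, u t (s.1 t.1) (s.2 t.2)) / S.card

/-- `s` is Pareto optimal over `S` if no profile `s'` has `EU_S(s') > EU_S(s)`. -/
def ParetoOptimal (u : ℤ × ℤ → Act → Act → ℝ) (S : Finset (ℤ × ℤ))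
    (s : (ℤ → Act) × (ℤ → Act)) : Prop :=
  ¬ ∃ s' : (ℤ → Act) × (ℤ → Act), EU u s' S > EU u s S

/-- `u` satisfies conditions (U1) and (U2) on the arrival pairs of `T`. -/
def SatisfiesU1U2 (kmin kmax N : ℤ) (u : ℤ × ℤ → Act → Act → ℝ) : Prop :=
  ∀ t ∈ T kmin kmax,
    (t.1 < N ∧ t.2 < N →
      u t c c > u t o o ∧ u t o o > u t c o ∧ u t c o = u t o c) ∧
    (N ≤ t.1 ∨ N ≤ t.2 →
      u t o o > u t c o ∧ u t c o = u t o c ∧ u t o c = u t c c)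

/-- `u` is uniform with values `A > B > C` (the order is assumed separately). -/
def Uniform (kmin kmax N : ℤ) (u : ℤ × ℤ → Act → Act → ℝ) (A B C : ℝ) : Prop :=
  ∀ t ∈ T kmin kmax,
    (t.1 < N ∧ t.2 < N →
      u t c c = A ∧ u t o o = B ∧ u t c o = C ∧ u t o c = C) ∧
    (N ≤ t.1 ∨ N ≤ t.2 →
      u t o o = B ∧ u t c c = C ∧ u t c o = C ∧ u t o c = C)

/-- The cut-off strategy with cut-off `m`: canteen iff arriving strictly before `m`. -/
def cutoff (m : ℤ) : ℤ → Act := fun k => if k < m then c else o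

/-- The all-office strategy. -/
def allOffice : ℤ → Act := fun _ => o


/-- Parametrization of `T1` by `Icc kmin (kmax - 1)`. -/
def gfun (kmin : ℤ) (j : ℤ) : ℤ × ℤ := if j % 2 = kmin % 2 then (j, j + 1) else (j + 1, j)

lemma gfun_inj (kmin : ℤ) : Function.Injective (gfun kmin) := by
  intro a b h
  unfold gfun at h
  split_ifs at h <;> simp [Prod.ext_iff] at h <;> omega

lemma gfun_mem_T (kmin kmax : ℤ) (j : ℤ) (hj : j ∈ Finset.Icc kmin (kmax - 1)) :
    gfun kmin j ∈ T kmin kmax := by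
  simp only [Finset.mem_Icc] at hj
  unfold gfun T
  split_ifs with h
  · apply Finset.mem_union_left
    simp only [Finset.mem_image, Finset.mem_Icc]
    exact ⟨j, ⟨hj.1, hj.2⟩, rfl⟩
  · apply Finset.mem_union_right
    simp only [Finset.mem_image, Finset.mem_Icc]
    exact ⟨j + 1, ⟨by omega, by omega⟩, by simp⟩

lemma T1_eq_image (kmin kmax : ℤ) :
    T1 kmin kmax = (Finset.Icc kmin (kmax - 1)).image (gfun kmin) := by
  ext t
  simp only [T1, T, gfun, Finset.mem_filter, Finset.mem_union, Finset.mem_image,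
    Finset.mem_Icc]
  constructor
  · rintro ⟨⟨k, hk, rfl⟩ | ⟨k, hk, rfl⟩, hpar⟩
    · simp only at hpar
      exact ⟨k, hk, by rw [if_pos hpar]⟩
    · simp only at hpar
      refine ⟨k - 1, ⟨by omega, by omega⟩, ?_⟩
      rw [if_neg (by omega)]
      rw [show k - 1 + 1 = k by ring]
  · rintro ⟨j, hj, rfl⟩
    by_cases h : j % 2 = kmin % 2
    · rw [if_pos h]; exact ⟨Or.inl ⟨j, hj, rfl⟩, h⟩
    · rw [if_neg h]
      refine ⟨Or.inr ⟨j + 1, ⟨by omega, by omega⟩, by simp⟩, by simp; omega⟩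

/-- Expected utility over `T1` of the cut-off profile with cut-off
`kmin < m ≤ N`, for a uniform utility with values `A > B > C`. In particular
`|T1| = kmax - kmin`. -/
theorem stmt_9 (kmin kmax N : ℤ) (h1 : kmin < N) (h2 : N ≤ kmax)
    (A B C : ℝ) (hAB : A > B) (hBC : B > C)
    (u : ℤ × ℤ → Act → Act → ℝ) (hu : Uniform kmin kmax N u A B C)
    (m : ℤ) (hm1 : kmin < m) (hm2 : m ≤ N) :
    ((T1 kmin kmax).card : ℤ) = kmax - kmin ∧
    EU u (cutoff m, cutoff m) (T1 kmin kmax) =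
      (((m - 1 - kmin : ℤ) : ℝ) * A + C + ((kmax - m : ℤ) : ℝ) * B) /
        ((kmax - kmin : ℤ) : ℝ) := by
  have hkk : kmin ≤ kmax - 1 := by omega
  have hcardZ : ((T1 kmin kmax).card : ℤ) = kmax - kmin := by
    rw [T1_eq_image, Finset.card_image_of_injective _ (gfun_inj kmin), Int.card_Icc]
    omega
  refine ⟨hcardZ, ?_⟩
  have hval : ∀ j ∈ Finset.Icc kmin (kmax - 1),
      u (gfun kmin j) (cutoff m (gfun kmin j).1) (cutoff m (gfun kmin j).2)
        = if j < m - 1 then A else if j = m - 1 then C else B := by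
    intro j hj
    have ht := hu _ (gfun_mem_T kmin kmax j hj)
    simp only [Finset.mem_Icc] at hj
    by_cases h : j % 2 = kmin % 2
    · simp only [gfun, if_pos h] at ht ⊢
      simp only [cutoff]
      rcases lt_trichotomy j (m - 1) with hlt | heq | hgt
      · rw [if_pos (by omega : j < m), if_pos (by omega : j + 1 < m), if_pos hlt]
        exact (ht.1 ⟨by omega, by omega⟩).1
      · rw [if_pos (by omega : j < m), if_neg (by omega : ¬ j + 1 < m),
          if_neg (by omega), if_pos heq]
        by_cases hN : j + 1 < N
        · exact (ht.1 ⟨by omega, hN⟩).2.2.1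
        · exact (ht.2 (Or.inr (by omega))).2.2.1
      · rw [if_neg (by omega : ¬ j < m), if_neg (by omega : ¬ j + 1 < m),
          if_neg (by omega), if_neg (by omega)]
        by_cases hN : j + 1 < N
        · exact (ht.1 ⟨by omega, hN⟩).2.1
        · exact (ht.2 (Or.inr (by omega))).1
    · simp only [gfun, if_neg h] at ht ⊢
      simp only [cutoff]
      rcases lt_trichotomy j (m - 1) with hlt | heq | hgt
      · rw [if_pos (by omega : j + 1 < m), if_pos (by omega : j < m), if_pos hlt]
        exact (ht.1 ⟨by omega, by omega⟩).1
      · rw [if_neg (by omega : ¬ j + 1 < m), if_pos (by omega : j < m),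
          if_neg (by omega), if_pos heq]
        by_cases hN : j + 1 < N
        · exact (ht.1 ⟨hN, by omega⟩).2.2.2
        · exact (ht.2 (Or.inl (by omega))).2.2.2
      · rw [if_neg (by omega : ¬ j + 1 < m), if_neg (by omega : ¬ j < m),
          if_neg (by omega), if_neg (by omega)]
        by_cases hN : j + 1 < N
        · exact (ht.1 ⟨hN, by omega⟩).2.1
        · exact (ht.2 (Or.inl (by omega))).1
  unfold EU
  rw [T1_eq_image, Finset.sum_image (fun a _ b _ hab => gfun_inj kmin hab)]
  have hcR : (((Finset.Icc kmin (kmax - 1)).image (gfun kmin)).card : ℝ)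
      = ((kmax - kmin : ℤ) : ℝ) := by
    rw [Finset.card_image_of_injective _ (gfun_inj kmin), Int.card_Icc]
    norm_cast
    omega
  rw [hcR, Finset.sum_congr rfl hval]
  congr 1
  have hsplit : Finset.Icc kmin (kmax - 1)
      = Finset.Icc kmin (m - 2) ∪ Finset.Icc (m - 1) (kmax - 1) := by
    ext x; simp only [Finset.mem_union, Finset.mem_Icc]; omega
  have hdisj : Disjoint (Finset.Icc kmin (m - 2)) (Finset.Icc (m - 1) (kmax - 1)) := by
    rw [Finset.disjoint_left]
    intro x hx hx'
    simp only [Finset.mem_Icc] at hx hx'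
    omega
  rw [hsplit, Finset.sum_union hdisj]
  have hins : Finset.Icc (m - 1) (kmax - 1) = insert (m - 1) (Finset.Icc m (kmax - 1)) := by
    ext x; simp only [Finset.mem_insert, Finset.mem_Icc]; omega
  rw [hins, Finset.sum_insert (by simp [Finset.mem_Icc])]
  have e1 : ∑ j ∈ Finset.Icc kmin (m - 2),
      (if j < m - 1 then A else if j = m - 1 then C else B) = ((m - 1 - kmin : ℤ) : ℝ) * A := by
    rw [Finset.sum_congr rfl (fun j hj => ?_), Finset.sum_const, nsmul_eq_mul, Int.card_Icc]
    · congr 1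
      rw [← Int.cast_natCast, Int.toNat_of_nonneg (by omega)]
      push_cast; ring
    · simp only [Finset.mem_Icc] at hj
      rw [if_pos (by omega)]
  have e3 : ∑ j ∈ Finset.Icc m (kmax - 1),
      (if j < m - 1 then A else if j = m - 1 then C else B) = ((kmax - m : ℤ) : ℝ) * B := by
    rw [Finset.sum_congr rfl (fun j hj => ?_), Finset.sum_const, nsmul_eq_mul, Int.card_Icc]
    · congr 1
      rw [← Int.cast_natCast, Int.toNat_of_nonneg (by omega)]
      push_cast; ring
    · simp only [Finset.mem_Icc] at hj
      rw [if_neg (by omega), if_neg (by omega)]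
  rw [e1, e3, if_neg (by omega), if_pos rfl]
  ring
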